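/- No deterministic rule on ℓ-truncated elections can guarantee approximation ratio better than 1/(m-ℓ) for the Minimax rule: there is an ℓ-truncated profile with m voters and m candidates, symmetric under cyclic rotation of candidates, such that for any candidate chosen as winner there exists a completion in which that candidate's Minimax score is 1 while some other candidate's Minimax score is m - ℓ. -/

import Mathlib

open Finset
open Fin.NatCast

namespace Stmt14


variable {m : ℕ}

lemma sub_val (x y : Fin m) :
    (x - y).val = if y.val ≤ x.val then x.val - y.val else m + x.val - y.val := by
  have hx := x.isLt
  have hy := y.isLt
  rw [Fin.sub_def]
  dsimp
  split_ifs with h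
  · have e : m - y.val + x.val = (x.val - y.val) + m := by omega
    rw [e, Nat.add_mod_right, Nat.mod_eq_of_lt (by omega)]
  · rw [Nat.mod_eq_of_lt (by omega)]
    omega

lemma add_val (x y : Fin m) :
    (x + y).val = if x.val + y.val < m then x.val + y.val else x.val + y.val - m := by
  have hx := x.isLt
  have hy := y.isLt
  rw [Fin.val_add]
  split_ifs with h
  · exact Nat.mod_eq_of_lt h
  · have e : x.val + y.val = (x.val + y.val - m) + m := by omega
    conv_lhs => rw [e]
    rw [Nat.add_mod_right, Nat.mod_eq_of_lt (by omega)]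

lemma card_lt (t : ℕ) (ht : t ≤ m) :
    (univ.filter (fun i : Fin m => (i : ℕ) < t)).card = t := by
  have h : (univ.filter (fun i : Fin m => (i : ℕ) < t)) =
      (Finset.range t).attachFin
        (fun a ha => lt_of_lt_of_le (Finset.mem_range.mp ha) ht) := by
    ext i
    simp [Finset.mem_attachFin]
  rw [h, Finset.card_attachFin, Finset.card_range]

lemma card_equiv (e : Fin m ≃ Fin m) (q : Fin m → Prop) [DecidablePred q] :
    (univ.filter (fun v => q (e v))).card = (univ.filter q).card := by
  apply Finset.card_bij (fun v _ => e v)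
  · intro v hv
    simp only [mem_filter, mem_univ, true_and] at hv ⊢
    exact hv
  · intro x _ y _ h
    exact e.injective h
  · intro b hb
    refine ⟨e.symm b, ?_, by simp⟩
    simp only [mem_filter, mem_univ, true_and] at hb ⊢
    simpa using hb

lemma card_top [NeZero m] (x : Fin m) (t : ℕ) (ht : t ≤ m) :
    (univ.filter (fun v : Fin m => ((x - v) : Fin m).val < t)).card = t := by
  have h := card_equiv (Equiv.subLeft x) (fun u : Fin m => (u : ℕ) < t)
  simp only [Equiv.subLeft_apply] at h
  rw [h, card_lt t ht]


lemma card_top' [NeZero m] (x : Fin m) (t : ℕ) (ht : t ≤ m) :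
    (univ.filter (fun v : Fin m => ((v - x) : Fin m).val < t)).card = t := by
  have h := card_equiv (Equiv.subRight x) (fun u : Fin m => (u : ℕ) < t)
  simp only [Equiv.subRight_apply] at h
  rw [h, card_lt t ht]

/-- ranking key of candidate `c` for voter `v`; unranked candidates are appended
in the cyclic order starting at `a`. -/
def key (ℓ : ℕ) {m : ℕ} (a v c : Fin m) : ℕ :=
  if ((c - v) : Fin m).val < ℓ then ((c - v) : Fin m).val else ℓ + ((c - a) : Fin m).val

end Stmt14


/-- Lower bound for Minimax on `ℓ`-truncated elections.  Candidates and voters are both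
`Fin m`; in the cyclic truncated profile voter `v` ranks `v, v+1, …, v+ℓ-1` (indices mod
`m`) as her top `ℓ`.  A completion is a full profile `rk` (voter `v` places candidate `c`
at position `rk v c`, 0-indexed) consistent with this truncated profile.  For every
candidate `w` chosen as winner there is a completion in which the Minimax score of `w`
(the minimum over `c' ≠ w` of the number of voters preferring `w` to `c'`) equals `1`,
while some other candidate has Minimax score `m - ℓ`; hence no deterministic rule on
`ℓ`-truncated elections is better than a `1/(m-ℓ)`-approximation of Minimax. -/
theorem stmt_14 (m ℓ : ℕ) (hℓ : 1 ≤ ℓ) (hℓm : ℓ < m) :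
    ∀ w : Fin m, ∃ rk : Fin m → (Fin m ≃ Fin m),
      -- consistency with the cyclic ℓ-truncated profile
      (∀ v j : Fin m, (j : ℕ) < ℓ → rk v (v + j) = j) ∧
      -- the Minimax score of the chosen winner w equals 1
      (∀ c' : Fin m, c' ≠ w →
        1 ≤ (Finset.univ.filter (fun v : Fin m => rk v w < rk v c')).card) ∧
      (∃ c' : Fin m, c' ≠ w ∧
        (Finset.univ.filter (fun v : Fin m => rk v w < rk v c')).card = 1) ∧
      -- some other candidate has Minimax score m - ℓ
      (∃ c : Fin m, c ≠ w ∧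
        (∀ c' : Fin m, c' ≠ c →
          m - ℓ ≤ (Finset.univ.filter (fun v : Fin m => rk v c < rk v c')).card) ∧
        (∃ c' : Fin m, c' ≠ c ∧
          (Finset.univ.filter (fun v : Fin m => rk v c < rk v c')).card = m - ℓ)) := by
  have hm : 2 ≤ m := by omega
  haveI : NeZero m := ⟨by omega⟩
  intro w
  set a : Fin m := w - 1 with ha
  set K : Fin m → Fin m → ℕ := fun v c => Stmt14.key ℓ a v c with hK
  have hone : (1 : Fin m).val = 1 := by
    have : ((1 : ℕ) : Fin m).val = 1 := Fin.val_cast_of_lt (by omega)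
    simpa using this
  have haval : a.val = if 1 ≤ w.val then w.val - 1 else m + w.val - 1 := by
    rw [ha, Stmt14.sub_val, hone]
  have keyinj : ∀ v : Fin m, Function.Injective (K v) := by
    intro v x y hxy
    simp only [hK, Stmt14.key] at hxy
    split_ifs at hxy with h1 h2 h2
    · have h : x - v = y - v := Fin.ext hxy
      have := congrArg (· + v) h
      simpa [sub_add_cancel] using this
    · omega
    · omega
    · have h : x - a = y - a := Fin.ext (show ((x - a : Fin m)).val = ((y - a : Fin m)).val by omega)
      have := congrArg (· + a) h
      simpa [sub_add_cancel] using this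
  have cardlt : ∀ v c : Fin m, (univ.filter (fun c' => K v c' < K v c)).card < m := by
    intro v c
    have hsub : (univ.filter (fun c' => K v c' < K v c)) ⊆ univ.erase c := by
      intro z hz
      simp only [mem_filter, mem_univ, true_and] at hz
      simp only [mem_erase, mem_univ, and_true]
      intro hzc; subst hzc; omega
    have h1 := Finset.card_le_card hsub
    have h2 : (univ.erase c).card = m - 1 := by
      rw [Finset.card_erase_of_mem (mem_univ c)]
      simp
    omega
  set rkf : Fin m → Fin m → Fin m :=
    fun v c => ⟨(univ.filter (fun c' => K v c' < K v c)).card, cardlt v c⟩ with hrkf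
  have mono : ∀ v x y : Fin m, K v x < K v y → rkf v x < rkf v y := by
    intro v x y h
    simp only [hrkf, Fin.mk_lt_mk]
    apply Finset.card_lt_card
    constructor
    · intro z hz
      simp only [mem_filter, mem_univ, true_and] at hz ⊢
      omega
    · intro hsub
      have hx : x ∈ univ.filter (fun c' => K v c' < K v y) := by
        simp only [mem_filter, mem_univ, true_and]; exact h
      have := hsub hx
      simp only [mem_filter, mem_univ, true_and] at this
      omega
  have rkiff0 : ∀ v x y : Fin m, rkf v x < rkf v y ↔ K v x < K v y := by
    intro v x y
    constructor
    · intro h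
      rcases lt_trichotomy (K v x) (K v y) with h' | h' | h'
      · exact h'
      · exact absurd (keyinj v h') (by rintro rfl; exact lt_irrefl _ h)
      · exact absurd h (by have := mono v y x h'; omega)
    · exact mono v x y
  have bij : ∀ v, Function.Bijective (rkf v) := by
    intro v
    have inj : Function.Injective (rkf v) := by
      intro x y h
      by_contra hne
      have hk : K v x ≠ K v y := fun hk => hne (keyinj v hk)
      rcases hk.lt_or_gt with h' | h'
      · exact (mono v x y h').ne h
      · exact (mono v y x h').ne' h
    exact Finite.injective_iff_bijective.mp inj
  set RK : Fin m → Fin m ≃ Fin m := fun v => Equiv.ofBijective (rkf v) (bij v) with hRK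
  have rkiff : ∀ v x y : Fin m, RK v x < RK v y ↔ K v x < K v y := by
    intro v x y
    simp only [hRK, Equiv.ofBijective_apply]
    exact rkiff0 v x y
  have haw : a ≠ w := by
    intro h
    have := congrArg Fin.val h
    rw [haval] at this
    have := w.isLt
    split_ifs at * <;> omega
  refine ⟨RK, ?_, ?_, ?_, ?_⟩
  · -- consistency
    intro v j hj
    apply Fin.ext
    simp only [hRK, Equiv.ofBijective_apply, hrkf]
    have hkvj : K v (v + j) = (j : ℕ) := by
      simp only [hK, Stmt14.key, add_sub_cancel_left]
      rw [if_pos hj]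
    have heq : (univ.filter (fun c' => K v c' < K v (v + j))) =
        univ.filter (fun c' : Fin m => ((c' - v) : Fin m).val < (j : ℕ)) := by
      apply Finset.filter_congr
      intro c' _
      rw [hkvj]
      simp only [hK, Stmt14.key]
      split_ifs with h
      · exact Iff.rfl
      · constructor
        · intro h'; omega
        · intro h'; omega
    rw [heq, Stmt14.card_top' v (j : ℕ) (le_of_lt j.isLt)]
  · -- score of w at least 1
    intro c' hc'
    refine le_trans ?_ (le_refl _)
    refine Finset.card_pos.mpr ⟨w, ?_⟩
    simp only [mem_filter, mem_univ, true_and]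
    rw [rkiff]
    have h0 : K w w = 0 := by
      simp only [hK, Stmt14.key, sub_self, Fin.val_zero]
      rw [if_pos (by omega)]
    have hne : K w c' ≠ K w w := fun h => hc' (keyinj w h)
    omega
  · -- score of w equals 1, witnessed by c' = a = w - 1
    refine ⟨a, haw, ?_⟩
    have heq : (univ.filter (fun v : Fin m => RK v w < RK v a)) = {w} := by
      ext v
      simp only [mem_filter, mem_univ, true_and, mem_singleton]
      rw [rkiff, Fin.ext_iff]
      simp only [hK, Stmt14.key]
      rw [show ((w - a : Fin m)).val = 1 by rw [ha, sub_sub_cancel, hone],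
        show ((a - a : Fin m)).val = 0 by simp,
        Stmt14.sub_val w v, Stmt14.sub_val a v]
      rw [haval]
      have hv := v.isLt; have hwv := w.isLt
      split_ifs <;> omega
    rw [heq, Finset.card_singleton]
  · -- candidate a has minimax score m - ℓ
    refine ⟨a, haw, ?_, ?_⟩
    · intro c' hc'
      have hsub : (univ.filter (fun v : Fin m => ¬ (RK v a < RK v c'))) ⊆
          univ.filter (fun v : Fin m => ((c' - v) : Fin m).val < ℓ) := by
        intro v hv
        simp only [mem_filter, mem_univ, true_and] at hv ⊢
        rw [rkiff] at hv
        by_contra htail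
        apply hv
        have hca : ((c' - a : Fin m)).val ≠ 0 := by
          intro h0
          apply hc'
          have : c' - a = 0 := Fin.ext (by simpa using h0)
          have := congrArg (· + a) this
          simpa [sub_add_cancel] using this
        simp only [hK, Stmt14.key]
        rw [show ((a - a : Fin m)).val = 0 by simp]
        split_ifs <;> omega
      have hcard := Finset.card_le_card hsub
      rw [Stmt14.card_top c' ℓ (le_of_lt hℓm)] at hcard
      have hsplit := Finset.card_filter_add_card_filter_not
        (s := (univ : Finset (Fin m))) (p := fun v : Fin m => RK v a < RK v c')
      rw [Finset.card_univ, Fintype.card_fin] at hsplit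
      omega
    · refine ⟨a + (ℓ : Fin m), ?_, ?_⟩
      · intro h
        have h0 : ((ℓ : ℕ) : Fin m) = 0 := by
          have := congrArg (fun x => x - a) h
          simpa [add_comm] using this
        have hdvd := (CharP.cast_eq_zero_iff (Fin m) m ℓ).mp h0
        have := Nat.le_of_dvd (by omega) hdvd
        omega
      · set c' : Fin m := a + (ℓ : Fin m) with hc'
        have hlv : ((ℓ : ℕ) : Fin m).val = ℓ := Fin.val_cast_of_lt hℓm
        have hc'val : c'.val = if a.val + ℓ < m then a.val + ℓ else a.val + ℓ - m := by
          rw [hc', Stmt14.add_val, hlv]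
        have heq : (univ.filter (fun v : Fin m => RK v a < RK v c')) =
            univ.filter (fun v : Fin m => ¬ (((c' - v) : Fin m)).val < ℓ) := by
          apply Finset.filter_congr
          intro v _
          rw [rkiff]
          simp only [hK, Stmt14.key]
          rw [show ((a - a : Fin m)).val = 0 by simp,
            show ((c' - a : Fin m)).val = ℓ by rw [hc', add_comm, add_sub_cancel_right, hlv],
            Stmt14.sub_val a v, Stmt14.sub_val c' v]
          rw [hc'val, haval]
          have hv := v.isLt; have hwv := w.isLt
          split_ifs <;> omega
        rw [heq]
        have hnot := Finset.card_filter_add_card_filter_not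
          (s := (univ : Finset (Fin m))) (p := fun v : Fin m => (((c' - v) : Fin m)).val < ℓ)
        rw [Finset.card_univ, Fintype.card_fin,
          Stmt14.card_top c' ℓ (le_of_lt hℓm)] at hnot
        omega
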